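/- Every right-infinite binary word in which every nonempty factor has exponent < 7/3 contains arbitrarily large antisquares: for every N there is an antisquare factor of order ≥ N. -/

import Mathlib

/-- Bitwise complement of a binary word. -/
def comp (x : List Bool) : List Bool := x.map (fun b => !b)

/-- An antisquare is a nonempty word of the form `y ++ comp y`. -/
def Antisquare (x : List Bool) : Prop := ∃ y : List Bool, y ≠ [] ∧ x = y ++ comp y

/-- `w` has period `p ≥ 1` if `w[i] = w[i+p]` whenever both indices are valid. -/
def HasPeriod (w : List Bool) (p : ℕ) : Prop :=
  1 ≤ p ∧ ∀ i, i + p < w.length → w.getD i false = w.getD (i + p) false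

/-- The exponent of a finite word: its length divided by its least period. -/
noncomputable def exponent (w : List Bool) : ℝ :=
  (w.length : ℝ) / ((sInf {p : ℕ | HasPeriod w p} : ℕ) : ℝ)

/-- `u` is a factor of the right-infinite word `w : ℕ → Bool`. -/
def FactorInf (u : List Bool) (w : ℕ → Bool) : Prop :=
  ∃ i : ℕ, u = (List.range u.length).map (fun t => w (i + t))

/-- `u` is a factor of the bi-infinite word `w : ℤ → Bool`. -/
def FactorBi (u : List Bool) (w : ℤ → Bool) : Prop :=
  ∃ i : ℤ, u = (List.range u.length).map (fun t => w (i + (t : ℤ)))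

/-- A binary word is good if its only antisquare factors are `01` and `10`. -/
def Good (w : List Bool) : Prop :=
  ∀ u, u <:+: w → Antisquare u → u = [false, true] ∨ u = [true, false]

private lemma bool_flip {a b : Bool} (h : a ≠ b) : b = !a := by
  cases a <;> cases b <;> simp_all

private lemma window_getD (w : ℕ → Bool) (q n i : ℕ) (hi : i < n) :
    ((List.range n).map (fun t => w (q + t))).getD i false = w (q + i) := by
  rw [List.getD_eq_getElem _ _ (by simpa using hi)]
  simp

/-- If a window of length `n` located at `q` has a period `p` with `n/p ≥ 7/3`,
we contradict the hypothesis. -/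
private lemma exp_ge (w : ℕ → Bool)
    (hexp : ∀ u, FactorInf u w → u ≠ [] → exponent u < 7 / 3)
    (q n p : ℕ) (hp : 1 ≤ p) (hn : 7 * p ≤ 3 * n)
    (hper : ∀ t, t + p < n → w (q + t) = w (q + t + p)) : False := by
  have hlen : ((List.range n).map (fun t => w (q + t))).length = n := by simp
  have hfac : FactorInf ((List.range n).map (fun t => w (q + t))) w := ⟨q, by rw [hlen]⟩
  have hne : (List.range n).map (fun t => w (q + t)) ≠ [] := by
    intro hcon
    rw [hcon] at hlen
    simp at hlen
    omega
  have hmem : HasPeriod ((List.range n).map (fun t => w (q + t))) p := by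
    refine ⟨hp, fun s hs => ?_⟩
    rw [hlen] at hs
    rw [window_getD w q n s (by omega), window_getD w q n (s + p) (by omega)]
    have e : q + (s + p) = q + s + p := by omega
    rw [e]
    exact hper s hs
  have hnonempty : {r : ℕ | HasPeriod ((List.range n).map (fun t => w (q + t))) r}.Nonempty :=
    ⟨p, hmem⟩
  have hsle : sInf {r : ℕ | HasPeriod ((List.range n).map (fun t => w (q + t))) r} ≤ p :=
    Nat.sInf_le hmem
  have hs1 := (Nat.sInf_mem hnonempty).1
  have hlt := hexp _ hfac hne
  simp only [exponent] at hlt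
  rw [hlen] at hlt
  set s := sInf {r : ℕ | HasPeriod ((List.range n).map (fun t => w (q + t))) r} with hs
  have hs0 : (0:ℝ) < (s : ℝ) := by exact_mod_cast hs1
  have h73 : (7:ℝ)/3 ≤ (n:ℝ)/(s:ℝ) := by
    rw [div_le_div_iff₀ (by norm_num) hs0]
    have h1 : 7 * s ≤ 3 * n := le_trans (Nat.mul_le_mul_left 7 hsle) hn
    have h2 : ((7 * s : ℕ) : ℝ) ≤ ((3 * n : ℕ) : ℝ) := by exact_mod_cast h1
    push_cast at h2
    linarith
  linarith

/-- Positions with equal adjacent letters are unbounded. -/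
private lemma E_unbounded (w : ℕ → Bool)
    (hexp : ∀ u, FactorInf u w → u ≠ [] → exponent u < 7 / 3)
    (M : ℕ) : ∃ e, M ≤ e ∧ w e = w (e + 1) := by
  by_contra h
  push_neg at h
  have alt : ∀ e, M ≤ e → w (e + 1) = !w e := fun e he => bool_flip (h e he)
  refine exp_ge w hexp M 5 2 (by norm_num) (by norm_num) ?_
  intro t ht
  have e1 : w (M + t + 2) = !w (M + t + 1) := alt (M + t + 1) (by omega)
  have e2 : w (M + t + 1) = !w (M + t) := alt (M + t) (by omega)
  rw [e1, e2, Bool.not_not]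

/-- Two consecutive equal-pair positions followed by another consecutive
equal-pair position cannot have an odd second gap. -/
private lemma no_odd_gap (w : ℕ → Bool)
    (hexp : ∀ u, FactorInf u w → u ≠ [] → exponent u < 7 / 3)
    (i j k : ℕ)
    (hi : w i = w (i + 1)) (hj : w j = w (j + 1)) (hk : w k = w (k + 1))
    (hij : i < j) (hjk : j < k)
    (hbij : ∀ m, i < m → m < j → w m ≠ w (m + 1))
    (hbjk : ∀ m, j < m → m < k → w m ≠ w (m + 1))
    (hodd : (k - j) % 2 = 1) : False := by
  have altjk : ∀ m, j < m → m < k → w (m + 1) = !w m :=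
    fun m h1 h2 => bool_flip (hbjk m h1 h2)
  have altij : ∀ m, i < m → m < j → w (m + 1) = !w m :=
    fun m h1 h2 => bool_flip (hbij m h1 h2)
  by_cases hk1 : k = j + 1
  · subst hk1
    refine exp_ge w hexp j 3 1 (by norm_num) (by norm_num) ?_
    intro t ht
    have ht2 : t < 2 := by omega
    interval_cases t
    · exact hj
    · exact hk
  by_cases hk5 : j + 5 ≤ k
  · refine exp_ge w hexp (j + 1) 5 2 (by norm_num) (by norm_num) ?_
    intro t ht
    have e1 : w (j + 1 + t + 2) = !w (j + 1 + t + 1) := altjk (j + 1 + t + 1) (by omega) (by omega)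
    have e2 : w (j + 1 + t + 1) = !w (j + 1 + t) := altjk (j + 1 + t) (by omega) (by omega)
    rw [show w (j + 1 + t + 2) = !w (j + 1 + t + 1) from e1, e2, Bool.not_not]
  have hk3 : k = j + 3 := by omega
  subst hk3
  -- letters after j
  have g2 : w (j + 2) = !w j :=
    (altjk (j + 1) (by omega) (by omega)).trans (congrArg Bool.not hj.symm)
  have g3 : w (j + 3) = w j := by
    have := (altjk (j + 2) (by omega) (by omega)).trans (congrArg Bool.not g2)
    rwa [Bool.not_not] at this
  have g4 : w (j + 4) = w j := hk.symm.trans g3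
  -- case analysis on first gap
  by_cases hj1 : j = i + 1
  · subst hj1
    refine exp_ge w hexp i 3 1 (by norm_num) (by norm_num) ?_
    intro t ht
    have ht2 : t < 2 := by omega
    interval_cases t
    · exact hi
    · exact hj
  by_cases hj5 : i + 5 ≤ j
  · refine exp_ge w hexp (i + 1) 5 2 (by norm_num) (by norm_num) ?_
    intro t ht
    have e1 : w (i + 1 + t + 2) = !w (i + 1 + t + 1) := altij (i + 1 + t + 1) (by omega) (by omega)
    have e2 : w (i + 1 + t + 1) = !w (i + 1 + t) := altij (i + 1 + t) (by omega) (by omega)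
    rw [e1, e2, Bool.not_not]
  have l1 : w (i + 1) = w i := hi.symm
  have hcases : j = i + 2 ∨ j = i + 3 ∨ j = i + 4 := by omega
  have l2 : w (i + 2) = !w i :=
    (altij (i + 1) (by omega) (by omega)).trans (congrArg Bool.not hi.symm)
  rcases hcases with hc | hc | hc <;> subst hc
  · -- j = i + 2
    have l3 : w (i + 3) = !w i := hj.symm.trans l2
    have l4 : w (i + 4) = w i := by
      have := g2.trans (congrArg Bool.not l2)
      rwa [Bool.not_not] at this
    have l5 : w (i + 5) = !w i := g3.trans l2
    have l6 : w (i + 6) = !w i := g4.trans l2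
    by_cases hc7 : w (i + 7) = w (i + 6)
    · refine exp_ge w hexp (i + 5) 3 1 (by norm_num) (by norm_num) ?_
      intro t ht
      have ht2 : t < 2 := by omega
      interval_cases t
      · exact l5.trans l6.symm
      · exact hc7.symm
    · have l7 : w (i + 7) = w i := by
        have h1 : w (i + 6) = !w (i + 7) := bool_flip hc7
        rw [l6] at h1
        cases hq : w i <;> cases hq7 : w (i + 7) <;> simp_all
      refine exp_ge w hexp (i + 1) 7 3 (by norm_num) (by norm_num) ?_
      intro t ht
      have ht2 : t < 4 := by omega
      interval_cases t
      · exact l1.trans l4.symm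
      · exact l2.trans l5.symm
      · exact l3.trans l6.symm
      · exact l4.trans l7.symm
  · -- j = i + 3
    have l3 : w (i + 3) = w i := by
      have := (altij (i + 2) (by omega) (by omega)).trans (congrArg Bool.not l2)
      rwa [Bool.not_not] at this
    have l4 : w (i + 4) = w i := hj.symm.trans l3
    have l5 : w (i + 5) = !w i := g2.trans (congrArg Bool.not l3)
    have l6 : w (i + 6) = w i := g3.trans l3
    have l7 : w (i + 7) = w i := g4.trans l3
    refine exp_ge w hexp (i + 1) 7 3 (by norm_num) (by norm_num) ?_
    intro t ht
    have ht2 : t < 4 := by omega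
    interval_cases t
    · exact l1.trans l4.symm
    · exact l2.trans l5.symm
    · exact l3.trans l6.symm
    · exact l4.trans l7.symm
  · -- j = i + 4
    have l3 : w (i + 3) = w i := by
      have := (altij (i + 2) (by omega) (by omega)).trans (congrArg Bool.not l2)
      rwa [Bool.not_not] at this
    have l4 : w (i + 4) = !w i :=
      (altij (i + 3) (by omega) (by omega)).trans (congrArg Bool.not l3)
    have l5 : w (i + 5) = !w i := hj.symm.trans l4
    have l6 : w (i + 6) = w i := by
      have := g2.trans (congrArg Bool.not l4)
      rwa [Bool.not_not] at this
    have l7 : w (i + 7) = !w i := g3.trans l4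
    have l8 : w (i + 8) = !w i := g4.trans l4
    refine exp_ge w hexp (i + 2) 7 3 (by norm_num) (by norm_num) ?_
    intro t ht
    have ht2 : t < 4 := by omega
    interval_cases t
    · exact l2.trans l5.symm
    · exact l3.trans l6.symm
    · exact l4.trans l7.symm
    · exact l5.trans l8.symm

/-- There is a base position from which adjacent pairs at even offsets always differ. -/
private lemma exists_base (w : ℕ → Bool)
    (hexp : ∀ u, FactorInf u w → u ≠ [] → exponent u < 7 / 3) :
    ∃ i0 : ℕ, ∀ k, w (i0 + 2 * k) ≠ w (i0 + 2 * k + 1) := by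
  have hEx : ∀ M : ℕ, ∃ e, M ≤ e ∧ w e = w (e + 1) := E_unbounded w hexp
  let e0 := Nat.find (hEx 0)
  have he0 : w e0 = w (e0 + 1) := (Nat.find_spec (hEx 0)).2
  let e1 := Nat.find (hEx (e0 + 1))
  have he1s : e0 + 1 ≤ e1 ∧ w e1 = w (e1 + 1) := Nat.find_spec (hEx (e0 + 1))
  have he1min : ∀ x, x < e1 → ¬(e0 + 1 ≤ x ∧ w x = w (x + 1)) :=
    fun x hx => Nat.find_min (hEx (e0 + 1)) hx
  have main : ∀ m, e1 < m → w m = w (m + 1) → (m - e1) % 2 = 0 := by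
    intro m
    induction m using Nat.strong_induction_on with
    | _ m IH =>
      intro hm hEm
      have hjE : w (Nat.findGreatest (fun x => w x = w (x + 1)) (m - 1))
          = w (Nat.findGreatest (fun x => w x = w (x + 1)) (m - 1) + 1) :=
        Nat.findGreatest_spec (P := fun x => w x = w (x + 1)) (n := m - 1) (m := e1) (by omega) he1s.2
      set j := Nat.findGreatest (fun x => w x = w (x + 1)) (m - 1) with hjdef
      have hje1 : e1 ≤ j := Nat.le_findGreatest (by omega) he1s.2
      have hjle : j ≤ m - 1 := Nat.findGreatest_le _
      have hjmax : ∀ x, j < x → x < m → ¬(w x = w (x + 1)) := fun x h1 h2 =>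
        Nat.findGreatest_is_greatest h1 (by omega)
      rcases eq_or_lt_of_le hje1 with hcase | hcase
      · have hb1 : ∀ x, e0 < x → x < e1 → ¬(w x = w (x + 1)) := by
          intro x h1 h2 hx
          exact he1min x h2 ⟨by omega, hx⟩
        have hb2 : ∀ x, e1 < x → x < m → ¬(w x = w (x + 1)) := by
          intro x h1 h2
          exact hjmax x (by omega) h2
        have gap : (m - e1) % 2 = 1 → False := fun ho =>
          no_odd_gap w hexp e0 e1 m he0 he1s.2 hEm (by omega) (by omega) hb1 hb2 ho
        rcases Nat.mod_two_eq_zero_or_one (m - e1) with h | h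
        · exact h
        · exact (gap h).elim
      · have hIH : (j - e1) % 2 = 0 := IH j (by omega) (by omega) hjE
        have hj'E : w (Nat.findGreatest (fun x => w x = w (x + 1)) (j - 1))
            = w (Nat.findGreatest (fun x => w x = w (x + 1)) (j - 1) + 1) :=
          Nat.findGreatest_spec (P := fun x => w x = w (x + 1)) (n := j - 1) (m := e1) (by omega) he1s.2
        set j' := Nat.findGreatest (fun x => w x = w (x + 1)) (j - 1) with hj'def
        have hj'ge : e1 ≤ j' := Nat.le_findGreatest (by omega) he1s.2
        have hj'le : j' ≤ j - 1 := Nat.findGreatest_le _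
        have hj'max : ∀ x, j' < x → x < j → ¬(w x = w (x + 1)) := fun x a b =>
          Nat.findGreatest_is_greatest a (by omega)
        have gap2 : (m - j) % 2 = 1 → False := fun ho =>
          no_odd_gap w hexp j' j m hj'E hjE hEm (by omega) (by omega)
            hj'max hjmax ho
        have hmj : (m - j) % 2 = 0 := by
          rcases Nat.mod_two_eq_zero_or_one (m - j) with h | h
          · exact h
          · exact (gap2 h).elim
        omega
  refine ⟨e1 + 1, fun k hcontra => ?_⟩
  have h2 := main (e1 + 1 + 2 * k) (by omega) hcontra
  omega

/-- Factor-exponent condition passes to the half word. -/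
private lemma renorm (w : ℕ → Bool)
    (hexp : ∀ u, FactorInf u w → u ≠ [] → exponent u < 7 / 3)
    (i0 : ℕ) (hi0 : ∀ k, w (i0 + 2 * k) ≠ w (i0 + 2 * k + 1)) :
    ∀ u, FactorInf u (fun k => w (i0 + 2 * k)) → u ≠ [] → exponent u < 7 / 3 := by
  intro u hu hne
  by_contra hge
  push_neg at hge
  obtain ⟨i, hifac⟩ := hu
  have hnpos : 0 < u.length := List.length_pos_of_ne_nil hne
  have hmemn : HasPeriod u u.length := ⟨hnpos, fun t ht => absurd ht (by omega)⟩
  have hnonempty : {r : ℕ | HasPeriod u r}.Nonempty := ⟨u.length, hmemn⟩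
  have hpmem := Nat.sInf_mem hnonempty
  set p := sInf {r : ℕ | HasPeriod u r} with hpdef
  have hp1 : 1 ≤ p := hpmem.1
  have hple : p ≤ u.length := Nat.sInf_le hmemn
  have hge' : 7 * p ≤ 3 * u.length := by
    have hexpu : exponent u = (u.length : ℝ) / (p : ℝ) := by simp only [exponent, ← hpdef]
    rw [hexpu] at hge
    have hp0 : (0:ℝ) < (p : ℝ) := by exact_mod_cast hp1
    rw [div_le_div_iff₀ (by norm_num) hp0] at hge
    have : ((7 * p : ℕ) : ℝ) ≤ ((3 * u.length : ℕ) : ℝ) := by push_cast; linarith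
    exact_mod_cast this
  have hentry : ∀ t, t < u.length → u.getD t false = w (i0 + 2 * (i + t)) := by
    intro t ht
    conv_lhs => rw [hifac]
    exact window_getD (fun k => w (i0 + 2 * k)) i u.length t ht
  have hper' : ∀ s, s + p < u.length → w (i0 + 2 * (i + s)) = w (i0 + 2 * (i + (s + p))) := by
    intro s hs
    have h2 := hpmem.2 s hs
    rw [hentry s (by omega), hentry (s + p) (by omega)] at h2
    exact h2
  have neg : ∀ k, w (i0 + 2 * k + 1) = !w (i0 + 2 * k) := fun k => bool_flip (hi0 k)
  refine exp_ge w hexp (i0 + 2 * i) (2 * u.length) (2 * p) (by omega) (by omega) ?_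
  intro t ht
  rcases Nat.even_or_odd t with ⟨s, hs⟩ | ⟨s, hs⟩
  · rw [show i0 + 2 * i + t + 2 * p = i0 + 2 * (i + (s + p)) by omega,
      show i0 + 2 * i + t = i0 + 2 * (i + s) by omega]
    exact hper' s (by omega)
  · rw [show i0 + 2 * i + t + 2 * p = i0 + 2 * (i + (s + p)) + 1 by omega,
      show i0 + 2 * i + t = i0 + 2 * (i + s) + 1 by omega,
      neg (i + s), neg (i + (s + p)), hper' s (by omega)]

/-- Antisquares of the half word double. -/
private lemma double (w : ℕ → Bool) (i0 : ℕ)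
    (hi0 : ∀ k, w (i0 + 2 * k) ≠ w (i0 + 2 * k + 1))
    (y' : List Bool) (hy' : y' ≠ [])
    (hfac : FactorInf (y' ++ comp y') (fun k => w (i0 + 2 * k))) :
    ∃ y : List Bool, y ≠ [] ∧ y.length = 2 * y'.length ∧ FactorInf (y ++ comp y) w := by
  obtain ⟨i, heq⟩ := hfac
  have hmpos : 0 < y'.length := List.length_pos_of_ne_nil hy'
  have hclen : (comp y').length = y'.length := by simp [comp]
  have hlen2 : (y' ++ comp y').length = 2 * y'.length := by simp [comp]; omega
  have hw' : ∀ t, t < 2 * y'.length →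
      w (i0 + 2 * (i + t)) = (y' ++ comp y').getD t false := by
    intro t ht
    have h1 := window_getD (fun k => w (i0 + 2 * k)) i ((y' ++ comp y').length) t
      (by omega)
    rw [← heq] at h1
    exact h1.symm
  have hgetD1 : ∀ s, s < y'.length →
      (y' ++ comp y').getD s false = y'.getD s false := by
    intro s hs
    rw [List.getD_eq_getElem _ _ (by omega), List.getD_eq_getElem _ _ hs,
      List.getElem_append_left hs]
  have hgetD2 : ∀ s, s < y'.length →
      (y' ++ comp y').getD (y'.length + s) false = !(y'.getD s false) := by
    intro s hs
    rw [List.getD_eq_getElem _ _ (by omega), List.getD_eq_getElem _ _ hs]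
    rw [List.getElem_append_right (by omega)]
    simp [comp]
  have hflip : ∀ s, s < y'.length →
      w (i0 + 2 * (i + (y'.length + s))) = !w (i0 + 2 * (i + s)) := by
    intro s hs
    rw [hw' (y'.length + s) (by omega), hw' s (by omega), hgetD2 s hs, hgetD1 s hs]
  have neg : ∀ k, w (i0 + 2 * k + 1) = !w (i0 + 2 * k) := fun k => bool_flip (hi0 k)
  refine ⟨(List.range (2 * y'.length)).map (fun t => w (i0 + 2 * i + t)), ?_, by simp, ?_⟩
  · intro hcon
    have h0 := congrArg List.length hcon
    rw [List.length_map, List.length_range, List.length_nil] at h0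
    omega
  · refine ⟨i0 + 2 * i, ?_⟩
    have hlen4 : ((List.range (2 * y'.length)).map (fun t => w (i0 + 2 * i + t)) ++
        comp ((List.range (2 * y'.length)).map (fun t => w (i0 + 2 * i + t)))).length
        = 4 * y'.length := by simp [comp]; omega
    rw [hlen4]
    apply List.ext_getElem
    · simp [comp]; omega
    · intro t h1 h2
      have ht4 : t < 4 * y'.length := by
        rw [hlen4] at h1; exact h1
      have hrhs : ((List.range (4 * y'.length)).map
          (fun t => w (i0 + 2 * i + t)))[t]'h2 = w (i0 + 2 * i + t) := by
        simp
      rw [hrhs]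
      by_cases hlt : t < 2 * y'.length
      · rw [List.getElem_append_left (by simpa using hlt)]
        simp
      · have hr : t - 2 * y'.length < 2 * y'.length := by omega
        rw [List.getElem_append_right (by simpa using hlt)]
        have : (comp ((List.range (2 * y'.length)).map (fun t => w (i0 + 2 * i + t))))[
            t - ((List.range (2 * y'.length)).map (fun t => w (i0 + 2 * i + t))).length]'
            (by simp [comp]; omega)
            = !w (i0 + 2 * i + (t - 2 * y'.length)) := by
          simp [comp]
        rw [this]
        -- goal : !w (i0+2i+(t-2m)) = w (i0+2i+t)
        set r := t - 2 * y'.length with hrdef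
        have htr : t = 2 * y'.length + r := by omega
        rcases Nat.even_or_odd r with ⟨s, hsd⟩ | ⟨s, hsd⟩
        · have e1 : i0 + 2 * i + t = i0 + 2 * (i + (y'.length + s)) := by omega
          have e2 : i0 + 2 * i + r = i0 + 2 * (i + s) := by omega
          rw [e1, e2, hflip s (by omega)]
        · have e1 : i0 + 2 * i + t = i0 + 2 * (i + (y'.length + s)) + 1 := by omega
          have e2 : i0 + 2 * i + r = i0 + 2 * (i + s) + 1 := by omega
          rw [e1, e2, neg (i + (y'.length + s)), neg (i + s), hflip s (by omega),
            Bool.not_not]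

/-- every right-infinite binary word avoiding 7/3-powers contains
arbitrarily large antisquares. -/
theorem stmt_7 (w : ℕ → Bool)
    (hexp : ∀ u, FactorInf u w → u ≠ [] → exponent u < 7 / 3) :
    ∀ N : ℕ, ∃ y : List Bool, y ≠ [] ∧ N ≤ y.length ∧ FactorInf (y ++ comp y) w := by
  have H : ∀ N : ℕ, ∀ v : ℕ → Bool,
      (∀ u, FactorInf u v → u ≠ [] → exponent u < 7 / 3) →
      ∃ y : List Bool, y ≠ [] ∧ N ≤ y.length ∧ FactorInf (y ++ comp y) v := by
    intro N
    induction N using Nat.strong_induction_on with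
    | _ N IH =>
      intro v hv
      obtain ⟨i0, hi0⟩ := exists_base v hv
      by_cases hN : N ≤ 1
      · refine ⟨[v i0], by simp, by simp; omega, ⟨i0, ?_⟩⟩
        have h1 : v (i0 + 1) = !v i0 := bool_flip (by simpa using hi0 0)
        have hl : ([v i0] ++ comp [v i0]).length = 2 := by simp [comp]
        rw [hl]
        simp [comp, List.range_succ, h1]
      · obtain ⟨y', hne', hlen', hfac'⟩ := IH ((N + 1) / 2) (by omega) _ (renorm v hv i0 hi0)
        obtain ⟨y, hne, hlen, hfac⟩ := double v i0 hi0 y' hne' hfac'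
        exact ⟨y, hne, by omega, hfac⟩
  intro N
  exact H N w hexp
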